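/- Let ζ₅ = exp(2πi/5) ∈ ℂ and let L be the smallest subfield of ℂ containing ζ₅ and i√3 (that is, L = ℚ(ζ₅, √−3)). Then the element α = 3ζ₅³ + 4ζ₅² + 3ζ₅ is not a square in L: there is no v ∈ L with v² = α. Consequently, the quadratic form ⟨γ, −θ⟩ over L with γ = 1 − ζ₅ and θ = (ζ₅ + 1)/(ζ₅ − 1) is anisotropic: v₁²γ − v₂²θ = 0 with v₁, v₂ ∈ L implies v₁ = v₂ = 0. -/

import Mathlib

open Complex

open Polynomial

-- Key mod-p lemma: if `r` is a root of `Φ₅` in `ZMod N` and `E` evaluates at `r`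
-- to a nonsquare, then no integer polynomial in `ζ` squares to `aeval ζ E`.
lemma keyA {ζ : ℂ} (hprim : IsPrimitiveRoot ζ 5)
    (hΦζ : ζ^4 + ζ^3 + ζ^2 + ζ + 1 = 0)
    (N : ℕ) (r : ZMod N) (hr : r^4 + r^3 + r^2 + r + 1 = 0)
    (E : Polynomial ℤ) (hNR : ∀ x : ZMod N, x^2 ≠ aeval r E)
    (P : Polynomial ℤ) : (aeval ζ P)^2 ≠ aeval ζ E := by
  intro hPE
  set Φ : ℤ[X] := X^4 + X^3 + X^2 + X + 1 with hΦdef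
  have hmon : Φ.Monic := by unfold Φ; monicity!
  have hdeg : Φ.degree = 4 := by unfold Φ; compute_degree!
  have haΦ : aeval ζ Φ = 0 := by simp [hΦdef]; linear_combination hΦζ
  set F : ℤ[X] := P^2 - E with hFdef
  have haF : aeval ζ F = 0 := by simp [hFdef]; linear_combination hPE
  have hsplit := modByMonic_add_div F Φ
  have haR : aeval ζ (F %ₘ Φ) = 0 := by
    have h := congrArg (aeval ζ) hsplit
    rw [map_add, map_mul, haΦ, zero_mul, add_zero, haF] at h
    exact h
  have hR0 : F %ₘ Φ = 0 := by
    by_contra h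
    have hmapne : (F %ₘ Φ).map (algebraMap ℤ ℚ) ≠ 0 := by
      rw [Ne, Polynomial.map_eq_zero_iff (f := algebraMap ℤ ℚ) (fun a b => by exact_mod_cast id)]
      exact h
    have hdvd : minpoly ℚ ζ ∣ (F %ₘ Φ).map (algebraMap ℤ ℚ) := by
      apply minpoly.dvd
      rwa [Polynomial.aeval_map_algebraMap]
    have hmindeg : (minpoly ℚ ζ).degree = 4 := by
      rw [← Polynomial.cyclotomic_eq_minpoly_rat hprim (by norm_num)]
      rw [Polynomial.degree_cyclotomic]
      norm_num [Nat.totient_prime (by norm_num : Nat.Prime 5)]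
    have h4 : ((F %ₘ Φ).map (algebraMap ℤ ℚ)).degree < (minpoly ℚ ζ).degree := by
      rw [Polynomial.degree_map_eq_of_injective Int.cast_injective, hmindeg]
      exact (degree_modByMonic_lt F hmon).trans_le (le_of_eq hdeg)
    exact hmapne (Polynomial.eq_zero_of_dvd_of_degree_lt hdvd h4)
  have hfac : F = Φ * (F /ₘ Φ) := by
    conv_lhs => rw [← hsplit]
    rw [hR0, zero_add]
  have hev := congrArg (aeval (r : ZMod N)) hfac
  have hΦr : aeval (r : ZMod N) Φ = 0 := by simp [hΦdef]; linear_combination hr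
  rw [map_mul, hΦr, zero_mul, hFdef, map_sub, map_pow] at hev
  exact hNR (aeval r P) (by linear_combination hev)


-- integral elements of ℚ(ζ₅) are ℤ-polynomials in ζ₅
lemma memInt {ζ : ℂ} (hprim : IsPrimitiveRoot ζ 5) :
    ∀ a ∈ IntermediateField.adjoin ℚ ({ζ} : Set ℂ), IsIntegral ℤ a →
      ∃ P : Polynomial ℤ, a = aeval ζ P := by
  set K := IntermediateField.adjoin ℚ ({ζ} : Set ℂ) with hK
  have hζK : ζ ∈ K := IntermediateField.subset_adjoin ℚ _ rfl
  set ζ' : K := ⟨ζ, hζK⟩ with hζ'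
  have hprim' : IsPrimitiveRoot ζ' 5 :=
    IsPrimitiveRoot.coe_submonoidClass_iff.mp hprim
  have halg : ∀ x ∈ ({ζ} : Set ℂ), IsAlgebraic ℚ x := by
    rintro x rfl
    exact (IsIntegral.isAlgebraic ⟨X^5 - 1, by monicity!,
      by simp [hprim.pow_eq_one]⟩)
  have heq : K.toSubalgebra = Algebra.adjoin ℚ ({ζ} : Set ℂ) :=
    IntermediateField.adjoin_toSubalgebra_of_isAlgebraic halg
  haveI h5 : Fact (Nat.Prime 5) := ⟨by norm_num⟩
  haveI hcyc0 : IsCyclotomicExtension {5} ℚ (Algebra.adjoin ℚ ({ζ} : Set ℂ)) :=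
    IsPrimitiveRoot.adjoin_isCyclotomicExtension ℚ (n := 5) (by exact_mod_cast hprim)
  haveI hcyc : IsCyclotomicExtension {5} ℚ K :=
    IsCyclotomicExtension.equiv _ ℚ _ (Subalgebra.equivOfEq _ _ heq.symm)
  haveI hic : IsIntegralClosure (Algebra.adjoin ℤ ({ζ'} : Set K)) ℤ K :=
    IsCyclotomicExtension.Rat.isIntegralClosure_adjoin_singleton_of_prime
      (p := 5) (by exact_mod_cast hprim')
  intro a haK hint
  have hint' : IsIntegral ℤ (⟨a, haK⟩ : K) := by
    rwa [← isIntegral_algebraMap_iff (algebraMap K ℂ).injective]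
  obtain ⟨y, hy⟩ := (IsIntegralClosure.isIntegral_iff
    (A := Algebra.adjoin ℤ ({ζ'} : Set K))).mp hint'
  obtain ⟨w, hw, hwa⟩ : ∃ w : K, w ∈ Algebra.adjoin ℤ ({ζ'} : Set K) ∧ (w : ℂ) = a :=
    ⟨y, y.2, by exact congrArg Subtype.val hy⟩
  rw [Algebra.adjoin_singleton_eq_range_aeval ℤ ζ'] at hw
  obtain ⟨P, hP⟩ := hw
  refine ⟨P, ?_⟩
  rw [← hwa, ← hP]
  exact (Polynomial.aeval_algebraMap_apply ℂ ζ' P).symm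

/-- Final Example of Section III (4-relay code): with `ζ₅ = exp(2πi/5)` and
`L = ℚ(ζ₅, √−3) ⊂ ℂ`, the element `α = 3ζ₅³ + 4ζ₅² + 3ζ₅` is not a square in
`L`; consequently the quadratic form `⟨γ, −θ⟩` with `γ = 1 − ζ₅`,
`θ = (ζ₅ + 1)/(ζ₅ − 1)` is anisotropic over `L`. -/
theorem alpha_not_square_and_anisotropic
    (ζ : ℂ) (hζ : ζ = Complex.exp (2 * Real.pi * Complex.I / 5))
    (L : IntermediateField ℚ ℂ)
    (hL : L = IntermediateField.adjoin ℚ {ζ, Complex.I * Real.sqrt 3})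
    (α : ℂ) (hα : α = 3 * ζ ^ 3 + 4 * ζ ^ 2 + 3 * ζ)
    (γ θ : ℂ) (hγ : γ = 1 - ζ) (hθ : θ = (ζ + 1) / (ζ - 1)) :
    (∀ v : ℂ, v ∈ L → v ^ 2 ≠ α)
      ∧ (∀ v₁ v₂ : ℂ, v₁ ∈ L → v₂ ∈ L →
          v₁ ^ 2 * γ - v₂ ^ 2 * θ = 0 → v₁ = 0 ∧ v₂ = 0) := by
  have hprim : IsPrimitiveRoot ζ 5 := by
    rw [hζ]
    have := Complex.isPrimitiveRoot_exp 5 (by norm_num)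
    norm_num at this
    exact this
  have hζ5 : ζ ^ 5 = 1 := hprim.pow_eq_one
  have hζ1 : ζ ≠ 1 := hprim.ne_one (by norm_num)
  have hΦ : ζ ^ 4 + ζ ^ 3 + ζ ^ 2 + ζ + 1 = 0 := by
    have h := sub_ne_zero.mpr hζ1
    apply mul_left_cancel₀ h
    rw [mul_zero]
    linear_combination hζ5
  set t : ℂ := Complex.I * Real.sqrt 3 with htdef
  have ht2 : t ^ 2 = -3 := by
    rw [htdef, mul_pow, Complex.I_sq, ← Complex.ofReal_pow,
      Real.sq_sqrt (by norm_num : (0:ℝ) ≤ 3)]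
    norm_num
  set K : IntermediateField ℚ ℂ := IntermediateField.adjoin ℚ ({ζ} : Set ℂ) with hKdef
  have hζK : ζ ∈ K := IntermediateField.subset_adjoin ℚ _ rfl
  -- ζ is integral over ℤ
  have hζint : IsIntegral ℤ ζ := ⟨X ^ 5 - 1, by monicity!, by simp [hζ5]⟩
  have htint : IsIntegral ℤ t := ⟨X ^ 2 + C 3, by monicity!, by simp [ht2]⟩
  -- values of integer polynomials at ζ are integral and lie in K
  have haev : ∀ E : Polynomial ℤ, aeval ζ E ∈ Algebra.adjoin ℤ ({ζ} : Set ℂ) := by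
    intro E
    have h := Algebra.adjoin_singleton_eq_range_aeval ℤ ζ
    rw [h]
    exact ⟨E, rfl⟩
  have hintaev : ∀ E : Polynomial ℤ, IsIntegral ℤ (aeval ζ E) := fun E =>
    IsIntegral.of_mem_of_fg _ hζint.fg_adjoin_singleton _ (haev E)
  have haevalK : ∀ E : Polynomial ℤ, aeval ζ E ∈ K := by
    intro E
    have hle : Algebra.adjoin ℤ ({ζ} : Set ℂ) ≤ K.toSubalgebra.restrictScalars ℤ :=
      Algebra.adjoin_le (by simpa using hζK)
    exact hle (haev E)
  -- t is not in K = ℚ(ζ₅)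
  have tnotinK : t ∉ K := by
    intro htK
    obtain ⟨P, hP⟩ := memInt hprim t htK htint
    refine keyA hprim hΦ 11 3 (by decide) (C (-3)) ?_ P
      (by rw [← hP, aeval_C]; push_cast; exact ht2)
    intro x
    rw [show (aeval (3 : ZMod 11)) (C (-3) : Polynomial ℤ) = 8 by
      rw [aeval_C]; decide]
    revert x
    decide
  -- decomposition of elements of L
  have hdecomp : ∀ v ∈ L, ∃ a ∈ K, ∃ b ∈ K, v = a + b * t := by
    intro v hv
    let T : Subalgebra ℚ ℂ :=
      { carrier := {z | ∃ a ∈ K, ∃ b ∈ K, z = a + b * t}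
        mul_mem' := by
          rintro x y ⟨a₁, ha₁, b₁, hb₁, rfl⟩ ⟨a₂, ha₂, b₂, hb₂, rfl⟩
          refine ⟨a₁ * a₂ + (-3) * (b₁ * b₂), ?_, a₁ * b₂ + a₂ * b₁, ?_, ?_⟩
          · exact K.add_mem (K.mul_mem ha₁ ha₂)
              (K.mul_mem (K.neg_mem (IntermediateField.intCast_mem K 3)) (K.mul_mem hb₁ hb₂))
          · exact K.add_mem (K.mul_mem ha₁ hb₂) (K.mul_mem ha₂ hb₁)
          · linear_combination b₁ * b₂ * ht2
        one_mem' := ⟨1, K.one_mem, 0, K.zero_mem, by ring⟩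
        add_mem' := by
          rintro x y ⟨a₁, ha₁, b₁, hb₁, rfl⟩ ⟨a₂, ha₂, b₂, hb₂, rfl⟩
          exact ⟨a₁ + a₂, K.add_mem ha₁ ha₂, b₁ + b₂, K.add_mem hb₁ hb₂, by ring⟩
        zero_mem' := ⟨0, K.zero_mem, 0, K.zero_mem, by ring⟩
        algebraMap_mem' := fun q =>
          ⟨algebraMap ℚ ℂ q, IntermediateField.algebraMap_mem K q, 0, K.zero_mem, by ring⟩ }
    have halgS : ∀ x ∈ ({ζ, t} : Set ℂ), IsAlgebraic ℚ x := by
      rintro x hx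
      rcases hx with rfl | hx
      · exact (hζint.tower_top (A := ℚ)).isAlgebraic
      · rcases hx with rfl
        exact (htint.tower_top (A := ℚ)).isAlgebraic
    have h1 : (IntermediateField.adjoin ℚ ({ζ, t} : Set ℂ)).toSubalgebra
        = Algebra.adjoin ℚ ({ζ, t} : Set ℂ) :=
      IntermediateField.adjoin_toSubalgebra_of_isAlgebraic halgS
    have hsub : Algebra.adjoin ℚ ({ζ, t} : Set ℂ) ≤ T := by
      apply Algebra.adjoin_le
      rintro x hx
      rcases hx with h | h
      · subst h
        exact ⟨x, hζK, 0, K.zero_mem, by ring⟩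
      · rcases h with h
        subst h
        exact ⟨0, K.zero_mem, 1, K.one_mem, by ring⟩
    have hv' : v ∈ Algebra.adjoin ℚ ({ζ, t} : Set ℂ) := by
      rw [← h1, IntermediateField.mem_toSubalgebra]
      rw [hL] at hv
      exact hv
    exact hsub hv'
  -- the master non-squareness criterion
  have notsq : ∀ (E : Polynomial ℤ) (N₁ N₂ : ℕ) (r₁ : ZMod N₁) (r₂ : ZMod N₂),
      r₁^4 + r₁^3 + r₁^2 + r₁ + 1 = 0 → r₂^4 + r₂^3 + r₂^2 + r₂ + 1 = 0 →
      (∀ x : ZMod N₁, x^2 ≠ aeval r₁ E) →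
      (∀ x : ZMod N₂, x^2 ≠ aeval r₂ (C (-3) * E)) →
      ∀ v ∈ L, v ^ 2 ≠ aeval ζ E := by
    intro E N₁ N₂ r₁ r₂ h1 h2 hE1 hE2 v hv hveq
    obtain ⟨a, haK, b, hbK, rfl⟩ := hdecomp v hv
    have hab : a * b = 0 := by
      by_contra hab
      apply tnotinK
      have hEK : aeval ζ E ∈ K := haevalK E
      have hteq : t = (aeval ζ E - a ^ 2 + 3 * b ^ 2) / (2 * a * b) := by
        rw [eq_div_iff (by simpa using hab)]
        linear_combination hveq + (-(b ^ 2)) * ht2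
      rw [hteq]
      refine K.div_mem ?_ ?_
      · refine K.add_mem (K.sub_mem hEK (K.pow_mem haK 2)) ?_
        exact K.mul_mem (IntermediateField.intCast_mem K 3) (K.pow_mem hbK 2)
      · exact K.mul_mem (K.mul_mem (IntermediateField.intCast_mem K 2) haK) hbK
    rcases mul_eq_zero.mp hab with hb | hb
    · -- a = 0 : v = b t, (3b)² = -3 aeval E
      subst hb
      have hw2 : (3 * b) ^ 2 = aeval ζ (C (-3) * E) := by
        have hrw : (aeval ζ) (C (-3) * E) = -3 * aeval ζ E := by
          rw [map_mul, aeval_C]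
          norm_num
        rw [hrw]
        linear_combination (-3 : ℂ) * hveq + 3 * b ^ 2 * ht2
      have hwK : (3 : ℂ) * b ∈ K := K.mul_mem (IntermediateField.intCast_mem K 3) hbK
      have hwint : IsIntegral ℤ ((3 : ℂ) * b) := by
        refine IsIntegral.of_pow (n := 2) (by norm_num) ?_
        rw [hw2]
        exact hintaev _
      obtain ⟨P, hP⟩ := memInt hprim _ hwK hwint
      exact keyA hprim hΦ N₂ r₂ h2 _ hE2 P (by rw [← hP]; exact hw2)
    · -- b = 0 : v = a, a² = aeval E
      subst hb
      have ha2 : a ^ 2 = aeval ζ E := by linear_combination hveq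
      have haint : IsIntegral ℤ a := by
        refine IsIntegral.of_pow (n := 2) (by norm_num) ?_
        rw [ha2]
        exact hintaev _
      obtain ⟨P, hP⟩ := memInt hprim _ haK haint
      exact keyA hprim hΦ N₁ r₁ h1 _ hE1 P (by rw [← hP]; exact ha2)
  -- first conjunct
  have hαE : aeval ζ (C 3 * X ^ 3 + C 4 * X ^ 2 + C 3 * X : Polynomial ℤ) = α := by
    rw [hα]
    simp only [map_add, map_mul, map_pow, aeval_C, aeval_X, eq_intCast, map_intCast, map_ofNat]
    all_goals (push_cast; ring)
  have part1 : ∀ v : ℂ, v ∈ L → v ^ 2 ≠ α := by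
    intro v hv
    rw [← hαE]
    refine notsq _ 31 31 2 2 (by decide) (by decide) ?_ ?_ v hv
    · intro x
      rw [show (aeval (2 : ZMod 31)) (C 3 * X ^ 3 + C 4 * X ^ 2 + C 3 * X : Polynomial ℤ)
          = 15 by
          simp only [map_add, map_mul, map_pow, aeval_C, aeval_X, algebraMap_int_eq,
            eq_intCast, map_intCast, map_ofNat]
          decide]
      revert x; decide
    · intro x
      rw [show (aeval (2 : ZMod 31)) (C (-3) * (C 3 * X ^ 3 + C 4 * X ^ 2 + C 3 * X)
          : Polynomial ℤ) = 17 by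
          simp only [map_add, map_mul, map_pow, aeval_C, aeval_X, algebraMap_int_eq,
            eq_intCast, map_intCast, map_ofNat]
          decide]
      revert x; decide
  refine ⟨part1, ?_⟩
  -- second conjunct
  have h3αE : aeval ζ (C 9 * X ^ 3 + C 12 * X ^ 2 + C 9 * X : Polynomial ℤ) = 3 * α := by
    rw [hα]
    simp only [map_add, map_mul, map_pow, aeval_C, aeval_X, eq_intCast, map_intCast, map_ofNat]
    all_goals (push_cast; ring)
  have part3 : ∀ u : ℂ, u ∈ L → u ^ 2 ≠ 3 * α := by
    intro u hu
    rw [← h3αE]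
    refine notsq _ 31 31 4 4 (by decide) (by decide) ?_ ?_ u hu
    · intro x
      rw [show (aeval (4 : ZMod 31)) (C 9 * X ^ 3 + C 12 * X ^ 2 + C 9 * X : Polynomial ℤ)
          = 29 by
          simp only [map_add, map_mul, map_pow, aeval_C, aeval_X, algebraMap_int_eq,
            eq_intCast, map_intCast, map_ofNat]
          decide]
      revert x; decide
    · intro x
      rw [show (aeval (4 : ZMod 31)) (C (-3) * (C 9 * X ^ 3 + C 12 * X ^ 2 + C 9 * X)
          : Polynomial ℤ) = 6 by
          simp only [map_add, map_mul, map_pow, aeval_C, aeval_X, algebraMap_int_eq,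
            eq_intCast, map_intCast, map_ofNat]
          decide]
      revert x; decide
  intro v₁ v₂ hv₁ hv₂ heq
  have hζm1 : ζ - 1 ≠ 0 := sub_ne_zero.mpr hζ1
  have hζp1 : ζ + 1 ≠ 0 := by
    intro h
    have h1 : ζ = -1 := by linear_combination h
    rw [h1] at hζ5
    norm_num at hζ5
  have hγ0 : γ ≠ 0 := by rw [hγ]; intro h; exact hζ1 (by linear_combination -h)
  have hθ0 : θ ≠ 0 := by
    rw [hθ]
    exact div_ne_zero hζp1 hζm1
  by_cases hv2 : v₂ = 0
  · subst hv2
    have : v₁ ^ 2 * γ = 0 := by linear_combination heq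
    have hv1 : v₁ = 0 := by
      rcases mul_eq_zero.mp this with h | h
      · exact pow_eq_zero_iff (by norm_num) |>.mp h
      · exact absurd h hγ0
    exact ⟨hv1, rfl⟩
  · exfalso
    have hv1 : v₁ ≠ 0 := by
      intro h
      subst h
      have : v₂ ^ 2 * θ = 0 := by linear_combination -heq
      rcases mul_eq_zero.mp this with h | h
      · exact hv2 (pow_eq_zero_iff (by norm_num) |>.mp h)
      · exact hθ0 h
    -- the isotropy vector gives a square root of 3α in L
    set c : ℂ := 1 + 2 * ζ + 2 * ζ ^ 4 with hcdef
    have hc2 : c ^ 2 = 5 := by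
      rw [hcdef]
      linear_combination (4 * ζ ^ 3 + 8) * hζ5 + 4 * hΦ
    have hγθ : 5 * (ζ + 1) = α * (ζ - 1) ^ 2 := by
      rw [hα]
      linear_combination (-3) * hζ5 + 2 * hΦ
    have hEq' : v₁ ^ 2 * ((1 - ζ) * (ζ - 1)) = v₂ ^ 2 * (ζ + 1) := by
      have h0 : v₁ ^ 2 * γ = v₂ ^ 2 * θ := by linear_combination heq
      rw [hγ, hθ] at h0
      calc v₁ ^ 2 * ((1 - ζ) * (ζ - 1)) = (v₁ ^ 2 * (1 - ζ)) * (ζ - 1) := by ring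
        _ = v₂ ^ 2 * ((ζ + 1) / (ζ - 1)) * (ζ - 1) := by rw [h0]
        _ = v₂ ^ 2 * (ζ + 1) := by field_simp
    set u : ℂ := v₁ * t * c / v₂ with hudef
    have huL : u ∈ L := by
      have htL : t ∈ L := by
        rw [hL]
        exact IntermediateField.subset_adjoin ℚ _ (by simp)
      have hζL : ζ ∈ L := by
        rw [hL]
        exact IntermediateField.subset_adjoin ℚ _ (by simp)
      refine L.div_mem (L.mul_mem (L.mul_mem hv₁ htL) ?_) hv₂
      refine L.add_mem (L.add_mem L.one_mem ?_) ?_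
      · exact L.mul_mem (IntermediateField.intCast_mem L 2) hζL
      · exact L.mul_mem (IntermediateField.intCast_mem L 2) (L.pow_mem hζL 4)
    have hu2 : u ^ 2 = 3 * α := by
      rw [hudef, div_pow, div_eq_iff (pow_ne_zero 2 hv2)]
      apply mul_left_cancel₀ (pow_ne_zero 2 hζm1)
      linear_combination ((ζ - 1) ^ 2 * v₁ ^ 2 * c ^ 2) * ht2
        + (-3 * (ζ - 1) ^ 2 * v₁ ^ 2) * hc2 + 15 * hEq' + (3 * v₂ ^ 2) * hγθ
    exact part3 u huL hu2
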